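/- For any fixed complex numbers e₁, e₂ (setting e₃ = −(e₁+e₂)), the bracket defined on the free ℂ-vector space with basis {V_n : n ∈ ℤ} by: [V_n,V_m] = (m−n)V_{n+m} if n,m both odd; [V_n,V_m] = (m−n)(V_{n+m} + 3e₁V_{n+m−2} + (e₁−e₂)(e₁−e₃)V_{n+m−4}) if n,m both even; and [V_n,V_m] = (m−n)V_{n+m} + (m−n−1)3e₁V_{n+m−2} + (m−n−2)(e₁−e₂)(e₁−e₃)V_{n+m−4} if n odd and m even (extended skew-symmetrically), satisfies the Jacobi identity. -/

import Mathlib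

noncomputable section

/-- Bilinear extension of structure constants `C` to a bracket on `ℤ →₀ ℂ`. -/
def br (C : ℤ → ℤ → (ℤ →₀ ℂ)) (x y : ℤ →₀ ℂ) : ℤ →₀ ℂ :=
  x.sum fun n a => y.sum fun m b => (a * b) • C n m

/-- Structure constants of the elliptic Krichever-Novikov vector field algebra, with
`e₃ = -(e₁+e₂)`, extended skew-symmetrically according to the parity of the indices. -/
def ellC (e₁ e₂ : ℂ) (n m : ℤ) : ℤ →₀ ℂ :=
  if Odd n then
    if Odd m then
      Finsupp.single (n + m) ((m : ℂ) - n)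
    else
      Finsupp.single (n + m) ((m : ℂ) - n)
        + Finsupp.single (n + m - 2) (((m : ℂ) - n - 1) * (3 * e₁))
        + Finsupp.single (n + m - 4) (((m : ℂ) - n - 2) * ((e₁ - e₂) * (e₁ - (-(e₁ + e₂)))))
  else
    if Odd m then
      -(Finsupp.single (n + m) ((n : ℂ) - m)
        + Finsupp.single (n + m - 2) (((n : ℂ) - m - 1) * (3 * e₁))
        + Finsupp.single (n + m - 4) (((n : ℂ) - m - 2) * ((e₁ - e₂) * (e₁ - (-(e₁ + e₂))))))
    else
      Finsupp.single (n + m) ((m : ℂ) - n)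
        + Finsupp.single (n + m - 2) (((m : ℂ) - n) * (3 * e₁))
        + Finsupp.single (n + m - 4) (((m : ℂ) - n) * ((e₁ - e₂) * (e₁ - (-(e₁ + e₂)))))

variable (C : ℤ → ℤ → (ℤ →₀ ℂ)) (e₁ e₂ : ℂ)

lemma br_add_left (x x' y) : br C (x + x') y = br C x y + br C x' y := by
  unfold br
  rw [Finsupp.sum_add_index (by simp) (by intro n a a'; simp [add_mul, add_smul, Finsupp.sum_add])]
lemma br_smul_left (c : ℂ) (x y) : br C (c • x) y = c • br C x y := by
  unfold br
  rw [Finsupp.sum_smul_index (by simp), Finsupp.smul_sum]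
  refine Finsupp.sum_congr fun n _ => ?_
  rw [Finsupp.smul_sum]
  exact Finsupp.sum_congr fun m _ => by rw [mul_assoc, mul_smul]
lemma br_single_single (n m : ℤ) (a b : ℂ) :
    br C (Finsupp.single n a) (Finsupp.single m b) = (a * b) • C n m := by
  unfold br
  rw [Finsupp.sum_single_index (by simp), Finsupp.sum_single_index (by simp)]
lemma br_neg_left (x y) : br C (-x) y = - br C x y := by
  rw [show -x = (-1 : ℂ) • x by simp, br_smul_left]; simp


lemma br_zero_left (y) : br C 0 y = 0 := by simp [br]
lemma br_zero_right (x) : br C x 0 = 0 := by simp [br]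
lemma br_add_right (x y y') : br C x (y + y') = br C x y + br C x y' := by
  unfold br
  rw [← Finsupp.sum_add]
  refine Finsupp.sum_congr fun n _ => ?_
  rw [Finsupp.sum_add_index (by simp) (by intro m b b'; simp [mul_add, add_smul])]
lemma br_smul_right (c : ℂ) (x y) : br C x (c • y) = c • br C x y := by
  unfold br
  rw [Finsupp.smul_sum]
  refine Finsupp.sum_congr fun n a => ?_
  rw [Finsupp.sum_smul_index (by simp), Finsupp.smul_sum]
  exact Finsupp.sum_congr fun m b => by rw [smul_smul]; congr 1; ring

lemma ellC_oo {n m : ℤ} (hn : Odd n) (hm : Odd m) :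
    ellC e₁ e₂ n m = Finsupp.single (n + m) ((m : ℂ) - n) := by
  rw [ellC, if_pos hn, if_pos hm]
lemma ellC_oe {n m : ℤ} (hn : Odd n) (hm : ¬ Odd m) :
    ellC e₁ e₂ n m = Finsupp.single (n + m) ((m : ℂ) - n)
        + Finsupp.single (n + m - 2) (((m : ℂ) - n - 1) * (3 * e₁))
        + Finsupp.single (n + m - 4) (((m : ℂ) - n - 2) * ((e₁ - e₂) * (e₁ - (-(e₁ + e₂))))) := by
  rw [ellC, if_pos hn, if_neg hm]
lemma ellC_eo {n m : ℤ} (hn : ¬ Odd n) (hm : Odd m) :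
    ellC e₁ e₂ n m = -(Finsupp.single (n + m) ((n : ℂ) - m)
        + Finsupp.single (n + m - 2) (((n : ℂ) - m - 1) * (3 * e₁))
        + Finsupp.single (n + m - 4) (((n : ℂ) - m - 2) * ((e₁ - e₂) * (e₁ - (-(e₁ + e₂)))))) := by
  rw [ellC, if_neg hn, if_pos hm]
lemma ellC_ee {n m : ℤ} (hn : ¬ Odd n) (hm : ¬ Odd m) :
    ellC e₁ e₂ n m = Finsupp.single (n + m) ((m : ℂ) - n)
        + Finsupp.single (n + m - 2) (((m : ℂ) - n) * (3 * e₁))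
        + Finsupp.single (n + m - 4) (((m : ℂ) - n) * ((e₁ - e₂) * (e₁ - (-(e₁ + e₂))))) := by
  rw [ellC, if_neg hn, if_neg hm]

lemma keyOOO (n m p : ℤ) (hn : Odd n) (hm : Odd m) (hp : Odd p) :
    br (ellC e₁ e₂) (ellC e₁ e₂ n m) (Finsupp.single p 1)
      + br (ellC e₁ e₂) (ellC e₁ e₂ m p) (Finsupp.single n 1)
      + br (ellC e₁ e₂) (ellC e₁ e₂ p n) (Finsupp.single m 1) = 0 := by
  simp only [Int.odd_iff, Int.not_odd_iff_even, Int.even_iff] at hn hm hp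
  have O : ∀ k : ℤ, k % 2 = 1 → Odd k := fun k hk => Int.odd_iff.mpr hk
  have E : ∀ k : ℤ, k % 2 = 0 → ¬ Odd k := fun k hk => by
    simp [Int.not_odd_iff_even, Int.even_iff, hk]
  rw [ellC_oo e₁ e₂ (O n hn) (O m hm),
      ellC_oo e₁ e₂ (O m hm) (O p hp),
      ellC_oo e₁ e₂ (O p hp) (O n hn)]
  simp only [br_neg_left, br_add_left, br_single_single, mul_one]
  rw [ellC_eo e₁ e₂ (E (n + m) (by omega)) (O p hp),
      ellC_eo e₁ e₂ (E (m + p) (by omega)) (O n hn),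
      ellC_eo e₁ e₂ (E (p + n) (by omega)) (O m hm)]
  simp only [smul_add, smul_neg, Finsupp.smul_single, smul_eq_mul, neg_add, neg_neg]
  simp only [show m + p + n = n + m + p from by ring, show m + p - 2 + n = n + m + p - 2 from by ring,
    show m + p - 4 + n = n + m + p - 4 from by ring,
    show p + n + m = n + m + p from by ring, show p + n - 2 + m = n + m + p - 2 from by ring,
    show p + n - 4 + m = n + m + p - 4 from by ring,
    show n + m - 2 + p = n + m + p - 2 from by ring, show n + m - 4 + p = n + m + p - 4 from by ring,
    show n + m + p - 2 - 2 = n + m + p - 4 from by ring,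
    show n + m + p - 2 - 4 = n + m + p - 6 from by ring,
    show n + m + p - 4 - 2 = n + m + p - 6 from by ring,
    show n + m + p - 4 - 4 = n + m + p - 8 from by ring]
  ext k
  simp only [Finsupp.coe_add, Finsupp.coe_neg, Pi.add_apply, Pi.neg_apply,
    Finsupp.single_apply, Finsupp.coe_zero, Pi.zero_apply]
  split_ifs <;> first | omega | (push_cast; ring)

lemma keyOOE (n m p : ℤ) (hn : Odd n) (hm : Odd m) (hp : ¬ Odd p) :
    br (ellC e₁ e₂) (ellC e₁ e₂ n m) (Finsupp.single p 1)
      + br (ellC e₁ e₂) (ellC e₁ e₂ m p) (Finsupp.single n 1)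
      + br (ellC e₁ e₂) (ellC e₁ e₂ p n) (Finsupp.single m 1) = 0 := by
  simp only [Int.odd_iff, Int.not_odd_iff_even, Int.even_iff] at hn hm hp
  have O : ∀ k : ℤ, k % 2 = 1 → Odd k := fun k hk => Int.odd_iff.mpr hk
  have E : ∀ k : ℤ, k % 2 = 0 → ¬ Odd k := fun k hk => by
    simp [Int.not_odd_iff_even, Int.even_iff, hk]
  rw [ellC_oo e₁ e₂ (O n hn) (O m hm),
      ellC_oe e₁ e₂ (O m hm) (E p (by omega)),
      ellC_eo e₁ e₂ (E p (by omega)) (O n hn)]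
  simp only [br_neg_left, br_add_left, br_single_single, mul_one]
  rw [ellC_ee e₁ e₂ (E (n + m) (by omega)) (E p (by omega)),
      ellC_oo e₁ e₂ (O (m + p) (by omega)) (O n hn),
      ellC_oo e₁ e₂ (O (m + p - 2) (by omega)) (O n hn),
      ellC_oo e₁ e₂ (O (m + p - 4) (by omega)) (O n hn),
      ellC_oo e₁ e₂ (O (p + n) (by omega)) (O m hm),
      ellC_oo e₁ e₂ (O (p + n - 2) (by omega)) (O m hm),
      ellC_oo e₁ e₂ (O (p + n - 4) (by omega)) (O m hm)]
  simp only [smul_add, smul_neg, Finsupp.smul_single, smul_eq_mul, neg_add, neg_neg]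
  simp only [show m + p + n = n + m + p from by ring, show m + p - 2 + n = n + m + p - 2 from by ring,
    show m + p - 4 + n = n + m + p - 4 from by ring,
    show p + n + m = n + m + p from by ring, show p + n - 2 + m = n + m + p - 2 from by ring,
    show p + n - 4 + m = n + m + p - 4 from by ring,
    show n + m - 2 + p = n + m + p - 2 from by ring, show n + m - 4 + p = n + m + p - 4 from by ring,
    show n + m + p - 2 - 2 = n + m + p - 4 from by ring,
    show n + m + p - 2 - 4 = n + m + p - 6 from by ring,
    show n + m + p - 4 - 2 = n + m + p - 6 from by ring,
    show n + m + p - 4 - 4 = n + m + p - 8 from by ring]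
  ext k
  simp only [Finsupp.coe_add, Finsupp.coe_neg, Pi.add_apply, Pi.neg_apply,
    Finsupp.single_apply, Finsupp.coe_zero, Pi.zero_apply]
  split_ifs <;> first | omega | (push_cast; ring)

lemma keyOEE (n m p : ℤ) (hn : Odd n) (hm : ¬ Odd m) (hp : ¬ Odd p) :
    br (ellC e₁ e₂) (ellC e₁ e₂ n m) (Finsupp.single p 1)
      + br (ellC e₁ e₂) (ellC e₁ e₂ m p) (Finsupp.single n 1)
      + br (ellC e₁ e₂) (ellC e₁ e₂ p n) (Finsupp.single m 1) = 0 := by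
  simp only [Int.odd_iff, Int.not_odd_iff_even, Int.even_iff] at hn hm hp
  have O : ∀ k : ℤ, k % 2 = 1 → Odd k := fun k hk => Int.odd_iff.mpr hk
  have E : ∀ k : ℤ, k % 2 = 0 → ¬ Odd k := fun k hk => by
    simp [Int.not_odd_iff_even, Int.even_iff, hk]
  rw [ellC_oe e₁ e₂ (O n hn) (E m (by omega)),
      ellC_ee e₁ e₂ (E m (by omega)) (E p (by omega)),
      ellC_eo e₁ e₂ (E p (by omega)) (O n hn)]
  simp only [br_neg_left, br_add_left, br_single_single, mul_one]
  rw [ellC_oe e₁ e₂ (O (n + m) (by omega)) (E p (by omega)),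
      ellC_oe e₁ e₂ (O (n + m - 2) (by omega)) (E p (by omega)),
      ellC_oe e₁ e₂ (O (n + m - 4) (by omega)) (E p (by omega)),
      ellC_eo e₁ e₂ (E (m + p) (by omega)) (O n hn),
      ellC_eo e₁ e₂ (E (m + p - 2) (by omega)) (O n hn),
      ellC_eo e₁ e₂ (E (m + p - 4) (by omega)) (O n hn),
      ellC_oe e₁ e₂ (O (p + n) (by omega)) (E m (by omega)),
      ellC_oe e₁ e₂ (O (p + n - 2) (by omega)) (E m (by omega)),
      ellC_oe e₁ e₂ (O (p + n - 4) (by omega)) (E m (by omega))]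
  simp only [smul_add, smul_neg, Finsupp.smul_single, smul_eq_mul, neg_add, neg_neg]
  simp only [show m + p + n = n + m + p from by ring, show m + p - 2 + n = n + m + p - 2 from by ring,
    show m + p - 4 + n = n + m + p - 4 from by ring,
    show p + n + m = n + m + p from by ring, show p + n - 2 + m = n + m + p - 2 from by ring,
    show p + n - 4 + m = n + m + p - 4 from by ring,
    show n + m - 2 + p = n + m + p - 2 from by ring, show n + m - 4 + p = n + m + p - 4 from by ring,
    show n + m + p - 2 - 2 = n + m + p - 4 from by ring,
    show n + m + p - 2 - 4 = n + m + p - 6 from by ring,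
    show n + m + p - 4 - 2 = n + m + p - 6 from by ring,
    show n + m + p - 4 - 4 = n + m + p - 8 from by ring]
  ext k
  simp only [Finsupp.coe_add, Finsupp.coe_neg, Pi.add_apply, Pi.neg_apply,
    Finsupp.single_apply, Finsupp.coe_zero, Pi.zero_apply]
  split_ifs <;> first | omega | (push_cast; ring)

lemma keyEEE (n m p : ℤ) (hn : ¬ Odd n) (hm : ¬ Odd m) (hp : ¬ Odd p) :
    br (ellC e₁ e₂) (ellC e₁ e₂ n m) (Finsupp.single p 1)
      + br (ellC e₁ e₂) (ellC e₁ e₂ m p) (Finsupp.single n 1)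
      + br (ellC e₁ e₂) (ellC e₁ e₂ p n) (Finsupp.single m 1) = 0 := by
  simp only [Int.odd_iff, Int.not_odd_iff_even, Int.even_iff] at hn hm hp
  have O : ∀ k : ℤ, k % 2 = 1 → Odd k := fun k hk => Int.odd_iff.mpr hk
  have E : ∀ k : ℤ, k % 2 = 0 → ¬ Odd k := fun k hk => by
    simp [Int.not_odd_iff_even, Int.even_iff, hk]
  rw [ellC_ee e₁ e₂ (E n (by omega)) (E m (by omega)),
      ellC_ee e₁ e₂ (E m (by omega)) (E p (by omega)),
      ellC_ee e₁ e₂ (E p (by omega)) (E n (by omega))]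
  simp only [br_neg_left, br_add_left, br_single_single, mul_one]
  rw [ellC_ee e₁ e₂ (E (n + m) (by omega)) (E p (by omega)),
      ellC_ee e₁ e₂ (E (n + m - 2) (by omega)) (E p (by omega)),
      ellC_ee e₁ e₂ (E (n + m - 4) (by omega)) (E p (by omega)),
      ellC_ee e₁ e₂ (E (m + p) (by omega)) (E n (by omega)),
      ellC_ee e₁ e₂ (E (m + p - 2) (by omega)) (E n (by omega)),
      ellC_ee e₁ e₂ (E (m + p - 4) (by omega)) (E n (by omega)),
      ellC_ee e₁ e₂ (E (p + n) (by omega)) (E m (by omega)),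
      ellC_ee e₁ e₂ (E (p + n - 2) (by omega)) (E m (by omega)),
      ellC_ee e₁ e₂ (E (p + n - 4) (by omega)) (E m (by omega))]
  simp only [smul_add, smul_neg, Finsupp.smul_single, smul_eq_mul, neg_add, neg_neg]
  simp only [show m + p + n = n + m + p from by ring, show m + p - 2 + n = n + m + p - 2 from by ring,
    show m + p - 4 + n = n + m + p - 4 from by ring,
    show p + n + m = n + m + p from by ring, show p + n - 2 + m = n + m + p - 2 from by ring,
    show p + n - 4 + m = n + m + p - 4 from by ring,
    show n + m - 2 + p = n + m + p - 2 from by ring, show n + m - 4 + p = n + m + p - 4 from by ring,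
    show n + m + p - 2 - 2 = n + m + p - 4 from by ring,
    show n + m + p - 2 - 4 = n + m + p - 6 from by ring,
    show n + m + p - 4 - 2 = n + m + p - 6 from by ring,
    show n + m + p - 4 - 4 = n + m + p - 8 from by ring]
  ext k
  simp only [Finsupp.coe_add, Finsupp.coe_neg, Pi.add_apply, Pi.neg_apply,
    Finsupp.single_apply, Finsupp.coe_zero, Pi.zero_apply]
  split_ifs <;> first | omega | (push_cast; ring)

lemma key (n m p : ℤ) :
    br (ellC e₁ e₂) (ellC e₁ e₂ n m) (Finsupp.single p 1)
      + br (ellC e₁ e₂) (ellC e₁ e₂ m p) (Finsupp.single n 1)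
      + br (ellC e₁ e₂) (ellC e₁ e₂ p n) (Finsupp.single m 1) = 0 := by
  have tr : ∀ a b : ℤ, Even a → ¬ Odd a := fun a b ha => Int.not_odd_iff_even.mpr ha
  rcases Int.even_or_odd n with en | odn <;> rcases Int.even_or_odd m with em | odm <;>
    rcases Int.even_or_odd p with ep | odp
  · exact keyEEE e₁ e₂ n m p (tr n m en) (tr m n em) (tr p n ep)
  · have h := keyOEE e₁ e₂ p n m odp (tr n m en) (tr m n em)
    rw [← h]; abel
  · have h := keyOEE e₁ e₂ m p n odm (tr p n ep) (tr n m en)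
    rw [← h]; abel
  · have h := keyOOE e₁ e₂ m p n odm odp (tr n m en)
    rw [← h]; abel
  · exact keyOEE e₁ e₂ n m p odn (tr m n em) (tr p n ep)
  · have h := keyOOE e₁ e₂ p n m odp odn (tr m n em)
    rw [← h]; abel
  · exact keyOOE e₁ e₂ n m p odn odm (tr p n ep)
  · exact keyOOO e₁ e₂ n m p odn odm odp

/-- For all `e₁, e₂ ∈ ℂ`, the elliptic bracket satisfies the Jacobi identity. -/
theorem elliptic_jacobi (e₁ e₂ : ℂ) (x y z : ℤ →₀ ℂ) :
    br (ellC e₁ e₂) (br (ellC e₁ e₂) x y) z + br (ellC e₁ e₂) (br (ellC e₁ e₂) y z) x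
      + br (ellC e₁ e₂) (br (ellC e₁ e₂) z x) y = 0 := by
  induction x using Finsupp.induction_linear with
  | zero => simp [br_zero_left, br_zero_right]
  | add f g hf hg =>
    have h : br (ellC e₁ e₂) (br (ellC e₁ e₂) (f + g) y) z
        + br (ellC e₁ e₂) (br (ellC e₁ e₂) y z) (f + g)
        + br (ellC e₁ e₂) (br (ellC e₁ e₂) z (f + g)) y
        = (br (ellC e₁ e₂) (br (ellC e₁ e₂) f y) z + br (ellC e₁ e₂) (br (ellC e₁ e₂) y z) f
            + br (ellC e₁ e₂) (br (ellC e₁ e₂) z f) y)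
          + (br (ellC e₁ e₂) (br (ellC e₁ e₂) g y) z + br (ellC e₁ e₂) (br (ellC e₁ e₂) y z) g
            + br (ellC e₁ e₂) (br (ellC e₁ e₂) z g) y) := by
      simp only [br_add_left, br_add_right]; abel
    rw [h, hf, hg, add_zero]
  | single n a =>
    induction y using Finsupp.induction_linear with
    | zero => simp [br_zero_left, br_zero_right]
    | add f g hf hg =>
      have h : br (ellC e₁ e₂) (br (ellC e₁ e₂) (Finsupp.single n a) (f + g)) z
          + br (ellC e₁ e₂) (br (ellC e₁ e₂) (f + g) z) (Finsupp.single n a)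
          + br (ellC e₁ e₂) (br (ellC e₁ e₂) z (Finsupp.single n a)) (f + g)
          = (br (ellC e₁ e₂) (br (ellC e₁ e₂) (Finsupp.single n a) f) z
              + br (ellC e₁ e₂) (br (ellC e₁ e₂) f z) (Finsupp.single n a)
              + br (ellC e₁ e₂) (br (ellC e₁ e₂) z (Finsupp.single n a)) f)
            + (br (ellC e₁ e₂) (br (ellC e₁ e₂) (Finsupp.single n a) g) z
              + br (ellC e₁ e₂) (br (ellC e₁ e₂) g z) (Finsupp.single n a)
              + br (ellC e₁ e₂) (br (ellC e₁ e₂) z (Finsupp.single n a)) g) := by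
        simp only [br_add_left, br_add_right]; abel
      rw [h, hf, hg, add_zero]
    | single m b =>
      induction z using Finsupp.induction_linear with
      | zero => simp [br_zero_left, br_zero_right]
      | add f g hf hg =>
        have h : br (ellC e₁ e₂) (br (ellC e₁ e₂) (Finsupp.single n a) (Finsupp.single m b)) (f + g)
            + br (ellC e₁ e₂) (br (ellC e₁ e₂) (Finsupp.single m b) (f + g)) (Finsupp.single n a)
            + br (ellC e₁ e₂) (br (ellC e₁ e₂) (f + g) (Finsupp.single n a)) (Finsupp.single m b)
            = (br (ellC e₁ e₂) (br (ellC e₁ e₂) (Finsupp.single n a) (Finsupp.single m b)) f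
                + br (ellC e₁ e₂) (br (ellC e₁ e₂) (Finsupp.single m b) f) (Finsupp.single n a)
                + br (ellC e₁ e₂) (br (ellC e₁ e₂) f (Finsupp.single n a)) (Finsupp.single m b))
              + (br (ellC e₁ e₂) (br (ellC e₁ e₂) (Finsupp.single n a) (Finsupp.single m b)) g
                + br (ellC e₁ e₂) (br (ellC e₁ e₂) (Finsupp.single m b) g) (Finsupp.single n a)
                + br (ellC e₁ e₂) (br (ellC e₁ e₂) g (Finsupp.single n a)) (Finsupp.single m b)) := by
          simp only [br_add_left, br_add_right]; abel
        rw [h, hf, hg, add_zero]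
      | single p c =>
        rw [br_single_single, br_single_single, br_single_single,
          br_smul_left, br_smul_left, br_smul_left,
          show (Finsupp.single p c : ℤ →₀ ℂ) = c • Finsupp.single p (1:ℂ) from by
            rw [Finsupp.smul_single, smul_eq_mul, mul_one],
          show (Finsupp.single n a : ℤ →₀ ℂ) = a • Finsupp.single n (1:ℂ) from by
            rw [Finsupp.smul_single, smul_eq_mul, mul_one],
          show (Finsupp.single m b : ℤ →₀ ℂ) = b • Finsupp.single m (1:ℂ) from by
            rw [Finsupp.smul_single, smul_eq_mul, mul_one],
          br_smul_right, br_smul_right, br_smul_right,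
          smul_smul, smul_smul, smul_smul,
          show a * b * c = a * (b * c) from by ring,
          show b * c * a = a * (b * c) from by ring,
          show c * a * b = a * (b * c) from by ring,
          ← smul_add, ← smul_add, key, smul_zero]
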